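/- Let Ω = {0,1}^K with the uniform distribution. For each t ∈ {1,...,K}, partition Ω by the t-th bit: S₀ = {i : bit t of i is 0}, S₁ = {i : bit t of i is 1}. Then after conditioning sequentially on any fixed values of the BSC posterior updates for bits 1,...,t-1, each of S₀ and S₁ has total posterior probability exactly 1/2 at step t; in particular the induced transmission is systematic (the transmitted symbol at time t equals bit t of the message θ). -/

import Mathlib

theorem aux_flip (K : ℕ) (p q : ℝ) (y : Fin K → Bool) (t : Fin K) :
    (∑ i ∈ Finset.univ.filter (fun i : Fin K → Bool => i t = false),
        ∏ s ∈ Finset.univ.filter (fun s : Fin K => (s : ℕ) < (t : ℕ)),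
          (if i s = y s then q else p))
    = (∑ i ∈ Finset.univ.filter (fun i : Fin K → Bool => i t = true),
        ∏ s ∈ Finset.univ.filter (fun s : Fin K => (s : ℕ) < (t : ℕ)),
          (if i s = y s then q else p)) := by
  apply Finset.sum_nbij' (fun i => Function.update i t true)
      (fun i => Function.update i t false)
  · intro i hi
    simp [Function.update_self]
  · intro i hi
    simp [Function.update_self]
  · intro i hi
    simp only [Finset.mem_filter] at hi
    funext s
    by_cases h : s = t
    · subst h; simp [hi.2]
    · simp [Function.update_of_ne h]
  · intro i hi
    simp only [Finset.mem_filter] at hi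
    funext s
    by_cases h : s = t
    · subst h; simp [hi.2]
    · simp [Function.update_of_ne h]
  · intro i hi
    apply Finset.prod_congr rfl
    intro s hs
    simp only [Finset.mem_filter] at hs
    have : s ≠ t := by rintro rfl; omega
    rw [Function.update_of_ne this]

/-- Systematic transmission over the BSC with bit-`t` partitioning:
after conditioning on any received symbols `y` for the earlier bits, the
(unnormalized) posterior mass of `S₀ = {i : i t = false}` and of
`S₁ = {i : i t = true}` are each exactly half of the total; and the
transmitted symbol at time `t` is bit `t` of the message. -/
theorem systematic_half_split (K : ℕ) (p q : ℝ)
    (hp0 : 0 < p) (hp2 : p < 1/2) (hq : q = 1 - p)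
    (y : Fin K → Bool) (t : Fin K) :
    (∑ i ∈ Finset.univ.filter (fun i : Fin K → Bool => i t = false),
        ∏ s ∈ Finset.univ.filter (fun s : Fin K => (s : ℕ) < (t : ℕ)),
          (if i s = y s then q else p))
      = (1/2) * ∑ i : Fin K → Bool,
          ∏ s ∈ Finset.univ.filter (fun s : Fin K => (s : ℕ) < (t : ℕ)),
            (if i s = y s then q else p) ∧
    (∑ i ∈ Finset.univ.filter (fun i : Fin K → Bool => i t = true),
        ∏ s ∈ Finset.univ.filter (fun s : Fin K => (s : ℕ) < (t : ℕ)),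
          (if i s = y s then q else p))
      = (1/2) * ∑ i : Fin K → Bool,
          ∏ s ∈ Finset.univ.filter (fun s : Fin K => (s : ℕ) < (t : ℕ)),
            (if i s = y s then q else p) ∧
    (∀ θ : Fin K → Bool,
      (θ ∈ Finset.univ.filter (fun i : Fin K → Bool => i t = true)) ↔ θ t = true) := by
  have hflip := aux_flip K p q y t
  have htot : (∑ i : Fin K → Bool,
          ∏ s ∈ Finset.univ.filter (fun s : Fin K => (s : ℕ) < (t : ℕ)),
            (if i s = y s then q else p))
      = (∑ i ∈ Finset.univ.filter (fun i : Fin K → Bool => i t = false),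
          ∏ s ∈ Finset.univ.filter (fun s : Fin K => (s : ℕ) < (t : ℕ)),
            (if i s = y s then q else p))
      + (∑ i ∈ Finset.univ.filter (fun i : Fin K → Bool => i t = true),
          ∏ s ∈ Finset.univ.filter (fun s : Fin K => (s : ℕ) < (t : ℕ)),
            (if i s = y s then q else p)) := by
    rw [← Finset.sum_filter_add_sum_filter_not Finset.univ (fun i : Fin K → Bool => i t = false)]
    simp
  refine ⟨by rw [htot, ← hflip]; ring, by rw [htot, hflip]; ring, fun θ => by simp⟩
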